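/- Let A be a finite set, 1 ≤ h ≤ |A|, and let ρ ⊆ A^h be a totally reflexive and totally symmetric h-ary relation with ρ ≠ ι_h^A. If g is a unary operation on A not preserving ρ, then there is an h-element subset D = {d_1,…,d_h} of A with (d_1,…,d_h) ∉ ρ such that the clone ⟨Pol(ρ) ∪ {g}⟩ contains every unary operation on A taking values only in D. -/

import Mathlib

/-- An `n`-ary operation on `A`. -/
abbrev Op (A : Type*) (n : ℕ) : Type _ := (Fin n → A) → A

/-- A family of sets of finitary operations is a clone if it contains all projections
and is closed under composition. -/
def IsClone {A : Type*} (C : ∀ n, Set (Op A n)) : Prop :=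
  (∀ (n : ℕ) (i : Fin n), (fun v : Fin n → A => v i) ∈ C n) ∧
  (∀ (n k : ℕ) (f : Op A n) (g : Fin n → Op A k),
    f ∈ C n → (∀ i, g i ∈ C k) → (fun v : Fin k → A => f (fun i => g i v)) ∈ C k)

/-- A clone is maximal if it is proper and any clone containing it is itself or everything. -/
def IsMaximalClone {A : Type*} (C : ∀ n, Set (Op A n)) : Prop :=
  IsClone C ∧ C ≠ (fun _ => Set.univ) ∧
  ∀ D : ∀ n, Set (Op A n), IsClone D → (∀ n, C n ⊆ D n) →
    D = C ∨ D = (fun _ => Set.univ)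

/-- An `n`-ary operation preserves an `h`-ary relation `ρ`. -/
def Preserves {A : Type*} {n h : ℕ} (f : Op A n) (ρ : Set (Fin h → A)) : Prop :=
  ∀ r : Fin n → Fin h → A, (∀ i, r i ∈ ρ) → (fun j : Fin h => f (fun i => r i j)) ∈ ρ

/-- The polymorphism clone of a relation. -/
def Pol {A : Type*} {h : ℕ} (ρ : Set (Fin h → A)) : ∀ n, Set (Op A n) :=
  fun n => {f | Preserves f ρ}

/-- The clone generated by a family of operations: the intersection of all clones containing it. -/
def CloneGen {A : Type*} (F : ∀ n, Set (Op A n)) : ∀ n, Set (Op A n) :=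
  fun n => {f | ∀ C : ∀ m, Set (Op A m), IsClone C → (∀ m, F m ⊆ C m) → f ∈ C n}

/-- Add a single `n`-ary operation `g` to a family of operations. -/
def withOp {A : Type*} (F : ∀ m, Set (Op A m)) {n : ℕ} (g : Op A n) :
    ∀ m, Set (Op A m) :=
  fun m => F m ∪ {f | ∃ h : n = m, f = cast (congrArg (Op A) h) g}

/-- The relation `ι_h^A` of tuples with two equal coordinates. -/
def iotaRel (A : Type*) (h : ℕ) : Set (Fin h → A) :=
  {v | ∃ i j : Fin h, i ≠ j ∧ v i = v j}

/-- A relation is totally reflexive if it contains `ι_h^A`. -/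
def TotallyReflexive {A : Type*} {h : ℕ} (ρ : Set (Fin h → A)) : Prop :=
  iotaRel A h ⊆ ρ

/-- A relation is totally symmetric if it is closed under permutations of coordinates. -/
def TotallySymmetric {A : Type*} {h : ℕ} (ρ : Set (Fin h → A)) : Prop :=
  ∀ (σ : Equiv.Perm (Fin h)) (v : Fin h → A), v ∈ ρ → (fun i => v (σ i)) ∈ ρ

/-- If a unary `g` does not preserve a totally reflexive, totally symmetric `ρ ≠ ι_h^A`
(`1 ≤ h ≤ |A|`), then there is an `h`-element subset `D` of `A` forming a tuple outside `ρ`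
such that `⟨Pol ρ ∪ {g}⟩` contains every unary operation with values in `D`. -/
theorem unary_functions_into_D {A : Type*} [Fintype A] (h : ℕ) (hh1 : 1 ≤ h)
    (hhA : h ≤ Fintype.card A) (ρ : Set (Fin h → A))
    (htr : TotallyReflexive ρ) (hts : TotallySymmetric ρ)
    (hne : ρ ≠ iotaRel A h) (g : Op A 1) (hg : ¬ Preserves g ρ) :
    ∃ d : Fin h → A, Function.Injective d ∧ d ∉ ρ ∧
      ∀ f : Op A 1, (∀ x : Fin 1 → A, ∃ i, f x = d i) →
        f ∈ CloneGen (withOp (Pol ρ) g) 1 := by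

  rw [Preserves] at hg
  push_neg at hg
  obtain ⟨a, ha, hd⟩ := hg
  set d : Fin h → A := fun j => g (fun i => a i j) with hdef
  have hdinj : Function.Injective d := by
    intro i j hij
    by_contra hne'
    exact hd (htr ⟨i, j, hne', hij⟩)
  refine ⟨d, hdinj, hd, ?_⟩
  intro f hf
  choose s hs using hf
  set u : Op A 1 := fun w => a 0 (s w) with hu
  have hupol : u ∈ Pol ρ 1 := by
    intro r hr
    by_cases hinj : Function.Injective (fun j => s (fun i => r i j))
    · have hbij : Function.Bijective (fun j => s (fun i => r i j)) :=
        (Fintype.bijective_iff_injective_and_card _).mpr ⟨hinj, rfl⟩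
      have := hts (Equiv.ofBijective _ hbij) (a 0) (ha 0)
      convert this using 2
      rfl
    · rw [Function.not_injective_iff] at hinj
      obtain ⟨i, j, heq, hne'⟩ := hinj
      exact htr ⟨i, j, hne', congrArg (a 0) heq⟩
  intro C hC hsub
  have hgC : g ∈ C 1 := hsub 1 (Or.inr ⟨rfl, rfl⟩)
  have huC : u ∈ C 1 := hsub 1 (Or.inl hupol)
  have hcomp := hC.2 1 1 g (fun _ => u) hgC (fun _ => huC)
  have hfeq : f = fun v : Fin 1 → A => g (fun i => u v) := by
    funext v
    rw [hs v, hdef, hu]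
    show g (fun i => a i (s v)) = g (fun _ => a 0 (s v))
    congr 1
    funext i
    rw [Fin.eq_zero i]
  rw [hfeq]
  exact hcomp
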